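/- Let A be an n×n copositive matrix and let u be a zero of A. Then u can be written as a finite sum of minimal zeros of A. -/

import Mathlib

open Matrix

/-- A symmetric matrix `A` is copositive if `xᵀ A x ≥ 0` for all entrywise nonnegative `x`. -/
def Copositive {n : ℕ} (A : Matrix (Fin n) (Fin n) ℝ) : Prop :=
  A.IsSymm ∧ ∀ x : Fin n → ℝ, (∀ i, 0 ≤ x i) → 0 ≤ x ⬝ᵥ A.mulVec x

/-- The support of a vector. -/
def Supp {ι : Type*} (u : ι → ℝ) : Set ι := {i | u i ≠ 0}

/-- A zero of a copositive matrix: a nonzero nonnegative vector `u` with `uᵀ A u = 0`. -/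
def IsZeroOf {n : ℕ} (A : Matrix (Fin n) (Fin n) ℝ) (u : Fin n → ℝ) : Prop :=
  u ≠ 0 ∧ (∀ i, 0 ≤ u i) ∧ u ⬝ᵥ A.mulVec u = 0

/-- A minimal zero: a zero such that no zero has support strictly contained in its support. -/
def IsMinimalZeroOf {n : ℕ} (A : Matrix (Fin n) (Fin n) ℝ) (u : Fin n → ℝ) : Prop :=
  IsZeroOf A u ∧ ¬ ∃ v, IsZeroOf A v ∧ Supp v ⊂ Supp u

/-- The principal submatrix of `A` with rows and columns in `I`. -/
def subMat {n : ℕ} (A : Matrix (Fin n) (Fin n) ℝ) (I : Finset (Fin n)) :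
    Matrix {i // i ∈ I} {i // i ∈ I} ℝ :=
  A.submatrix Subtype.val Subtype.val

/-- The subvector of `u` with indices in `I`. -/
def subVec {n : ℕ} (u : Fin n → ℝ) (I : Finset (Fin n)) : {i // i ∈ I} → ℝ :=
  fun i => u i.val

/-- Irreducibility of a copositive matrix `A` with respect to a set `M` of matrices. -/
def IrreducibleWrtSet {n : ℕ} (A : Matrix (Fin n) (Fin n) ℝ)
    (M : Set (Matrix (Fin n) (Fin n) ℝ)) : Prop :=
  ¬ ∃ γ : ℝ, 0 < γ ∧ ∃ B ∈ M, B ≠ 0 ∧ Copositive (A - γ • B)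

/-- Irreducibility of a copositive matrix `A` with respect to a single matrix `M`. -/
def IrreducibleWrtMat {n : ℕ} (A M : Matrix (Fin n) (Fin n) ℝ) : Prop :=
  ¬ ∃ γ : ℝ, 0 < γ ∧ Copositive (A - γ • M)

/-- An extremal element of a cone `K` of vectors. -/
def IsExtremalIn {ι : Type*} (K : Set (ι → ℝ)) (u : ι → ℝ) : Prop :=
  u ∈ K ∧ u ≠ 0 ∧ ∀ v w, v ∈ K → w ∈ K → u = v + w →
    (∃ a : ℝ, 0 ≤ a ∧ v = a • u) ∧ (∃ b : ℝ, 0 ≤ b ∧ w = b • u)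

/-- The matrix with entries 1 at positions `(i,j)` and `(j,i)` and 0 elsewhere. -/
def Eij {n : ℕ} (i j : Fin n) : Matrix (Fin n) (Fin n) ℝ :=
  fun a b => if (a = i ∧ b = j) ∨ (a = j ∧ b = i) then 1 else 0

lemma aux_dot_symm {n : ℕ} (A : Matrix (Fin n) (Fin n) ℝ) (hS : A.IsSymm) (x y : Fin n → ℝ) :
    x ⬝ᵥ A.mulVec y = y ⬝ᵥ A.mulVec x := by
  rw [Matrix.dotProduct_mulVec, ← Matrix.mulVec_transpose, hS.eq, dotProduct_comm]

lemma aux_expand {n : ℕ} (A : Matrix (Fin n) (Fin n) ℝ) (x y : Fin n → ℝ) :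
    (x + y) ⬝ᵥ A.mulVec (x + y) =
      x ⬝ᵥ A.mulVec x + y ⬝ᵥ A.mulVec x + x ⬝ᵥ A.mulVec y + y ⬝ᵥ A.mulVec y := by
  simp only [Matrix.mulVec_add, dotProduct_add, add_dotProduct]
  ring

lemma aux_mulVec_nonneg {n : ℕ} (A : Matrix (Fin n) (Fin n) ℝ) (hA : Copositive A)
    (u : Fin n → ℝ) (hu : IsZeroOf A u) (i : Fin n) : 0 ≤ A.mulVec u i := by
  obtain ⟨hS, hpos⟩ := hA
  obtain ⟨hne, hun, huA⟩ := hu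
  set a := A.mulVec u i with ha
  set c := A i i with hc
  set e : Fin n → ℝ := Pi.single i 1 with hedef
  have he_nn : ∀ j, 0 ≤ e j := by
    intro j
    simp only [hedef, Pi.single_apply]
    split <;> norm_num
  have hc0 : 0 ≤ c := by
    have := hpos e he_nn
    simpa [hedef, mulVec_single, dotProduct, Pi.single_apply,
      Finset.sum_ite_eq'] using this
  have key : ∀ t : ℝ, 0 < t → 0 ≤ 2 * t * a + t ^ 2 * c := by
    intro t ht
    have hx : ∀ j, 0 ≤ (u + t • e) j := by
      intro j
      have := he_nn j
      have := hun j
      simp only [Pi.add_apply, Pi.smul_apply, smul_eq_mul]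
      nlinarith
    have h0 := hpos _ hx
    have hsym : u ⬝ᵥ A.mulVec (t • e) =
        (t • e : Fin n → ℝ) ⬝ᵥ A.mulVec u := aux_dot_symm A hS _ _
    rw [aux_expand, huA, hsym] at h0
    have he1 : (t • e : Fin n → ℝ) ⬝ᵥ A.mulVec u = t * a := by
      simp [hedef, smul_dotProduct, dotProduct, Pi.single_apply, Finset.mul_sum, ha,
        Matrix.mulVec, Finset.sum_ite_eq']
    have he2 : (t • e : Fin n → ℝ) ⬝ᵥ A.mulVec (t • e) = t ^ 2 * c := by
      simp [hedef, smul_dotProduct, Matrix.mulVec_smul, dotProduct_smul, mulVec_single,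
        dotProduct, Pi.single_apply, Finset.sum_ite_eq', hc]
      ring
    rw [he1, he2] at h0
    linarith
  by_contra hneg
  push_neg at hneg
  have hc1 : (0:ℝ) < c + 1 := by linarith
  have hna : 0 < -a := neg_pos.mpr hneg
  have ht : 0 < -a / (c + 1) := div_pos hna hc1
  have hk := key _ ht
  have e1 : 2 * (-a / (c + 1)) * a + (-a / (c + 1)) ^ 2 * c =
      a ^ 2 * (-(c + 2)) / (c + 1) ^ 2 := by
    field_simp
    ring
  rw [e1] at hk
  have ha2 : 0 < a ^ 2 := by nlinarith
  have : a ^ 2 * (-(c + 2)) / (c + 1) ^ 2 < 0 :=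
    div_neg_of_neg_of_pos (by nlinarith) (by positivity)
  linarith

lemma aux_mulVec_eq_zero {n : ℕ} (A : Matrix (Fin n) (Fin n) ℝ) (hA : Copositive A)
    (u : Fin n → ℝ) (hu : IsZeroOf A u) (i : Fin n) (hi : 0 < u i) : A.mulVec u i = 0 := by
  have ha0 : 0 ≤ A.mulVec u i := aux_mulVec_nonneg A hA u hu i
  obtain ⟨hS, hpos⟩ := hA
  obtain ⟨hne, hun, huA⟩ := hu
  set a := A.mulVec u i with ha
  set c := A i i with hc
  set e : Fin n → ℝ := Pi.single i 1 with hedef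
  have he_nn : ∀ j, 0 ≤ e j := by
    intro j
    simp only [hedef, Pi.single_apply]
    split <;> norm_num
  have hc0 : 0 ≤ c := by
    have := hpos e he_nn
    simpa [hedef, mulVec_single, dotProduct, Pi.single_apply,
      Finset.sum_ite_eq'] using this
  have key : ∀ t : ℝ, 0 < t → t ≤ u i → 0 ≤ -(2 * t * a) + t ^ 2 * c := by
    intro t ht htu
    have hx : ∀ j, 0 ≤ (u - t • e) j := by
      intro j
      rcases eq_or_ne j i with h | h
      · subst h
        simp only [hedef, Pi.sub_apply, Pi.smul_apply, smul_eq_mul, Pi.single_eq_same]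
        linarith
      · simp only [hedef, Pi.sub_apply, Pi.smul_apply, smul_eq_mul, Pi.single_apply,
          if_neg h, mul_zero, sub_zero]
        exact hun j
    have h0 := hpos _ hx
    rw [sub_eq_add_neg, aux_expand, huA] at h0
    have he1 : ((-(t • e)) : Fin n → ℝ) ⬝ᵥ A.mulVec u = -(t * a) := by
      simp [hedef, neg_dotProduct, smul_dotProduct, dotProduct, Pi.single_apply,
        Finset.mul_sum, ha, Matrix.mulVec, Finset.sum_ite_eq']
    have he2 : ((-(t • e)) : Fin n → ℝ) ⬝ᵥ A.mulVec (-(t • e)) =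
        t ^ 2 * c := by
      simp [hedef, neg_dotProduct, dotProduct_neg, smul_dotProduct, Matrix.mulVec_smul,
        Matrix.mulVec_neg, Pi.neg_apply, Pi.smul_apply,
        dotProduct_smul, mulVec_single, dotProduct, Pi.single_apply, Finset.sum_ite_eq', hc]
      ring
    have he3 : u ⬝ᵥ A.mulVec (-(t • e)) = -(t * a) := by
      rw [aux_dot_symm A hS]; exact he1
    rw [he1, he2, he3] at h0
    linarith
  rcases eq_or_lt_of_le ha0 with h | h
  · exact h.symm
  · exfalso
    have hc1 : (0:ℝ) < c + 1 := by linarith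
    set t := min (u i) (a / (c + 1)) with htdef
    have ht : 0 < t := lt_min hi (by positivity)
    have htu : t ≤ u i := min_le_left _ _
    have htc : t ≤ a / (c + 1) := min_le_right _ _
    have hkey := key t ht htu
    have h2 : t * c ≤ a / (c + 1) * c := mul_le_mul_of_nonneg_right htc hc0
    have h3 : 2 * a ≤ t * c := by nlinarith [hkey, ht]
    have h4 : a / (c + 1) * c < 2 * a := by
      rw [div_mul_eq_mul_div, div_lt_iff₀ hc1]
      nlinarith
    linarith

lemma aux_cross_zero {n : ℕ} (A : Matrix (Fin n) (Fin n) ℝ) (hA : Copositive A)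
    (u v : Fin n → ℝ) (hu : IsZeroOf A u) (hv : IsZeroOf A v) (hsub : Supp v ⊆ Supp u) :
    v ⬝ᵥ A.mulVec u = 0 := by
  rw [dotProduct]
  apply Finset.sum_eq_zero
  intro i _
  rcases eq_or_ne (v i) 0 with h | h
  · simp [h]
  · have hiu : u i ≠ 0 := hsub h
    have : A.mulVec u i = 0 :=
      aux_mulVec_eq_zero A hA u hu i (lt_of_le_of_ne (hu.2.1 i) (Ne.symm hiu))
    simp [this]

theorem stmt4 {n : ℕ} (A : Matrix (Fin n) (Fin n) ℝ) (hA : Copositive A)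
    (u : Fin n → ℝ) (hu : IsZeroOf A u) :
    ∃ (m : ℕ) (f : Fin m → (Fin n → ℝ)),
      (∀ i, IsMinimalZeroOf A (f i)) ∧ u = ∑ i, f i := by
  classical
  suffices h : ∀ N : ℕ, ∀ u : Fin n → ℝ, IsZeroOf A u →
      (Finset.univ.filter (fun i => u i ≠ 0)).card ≤ N →
      ∃ (m : ℕ) (f : Fin m → (Fin n → ℝ)),
        (∀ i, IsMinimalZeroOf A (f i)) ∧ u = ∑ i, f i by
    exact h _ u hu le_rfl
  intro N
  induction N with
  | zero =>
    intro u hu hc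
    exfalso
    apply hu.1
    funext j
    show u j = 0
    by_contra hj
    have : j ∈ Finset.univ.filter (fun i => u i ≠ 0) := by simp [hj]
    simp [Finset.card_eq_zero.mp (Nat.le_zero.mp hc)] at this
  | succ N ih =>
    intro u hu hc
    by_cases hmin : IsMinimalZeroOf A u
    · exact ⟨1, fun _ => u, fun _ => hmin, by simp⟩
    · have hex : ∃ v, IsZeroOf A v ∧ Supp v ⊂ Supp u := by
        by_contra hno
        exact hmin ⟨hu, hno⟩
      obtain ⟨v, hv, hss⟩ := hex
      have hsub : Supp v ⊆ Supp u := hss.1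
      set S := Finset.univ.filter (fun i => v i ≠ 0) with hSdef
      have hSne : S.Nonempty := by
        rcases Function.ne_iff.mp hv.1 with ⟨j, hj⟩
        have hj' : v j ≠ 0 := by simpa using hj
        exact ⟨j, by simp [hSdef, hj']⟩
      obtain ⟨i₀, hi₀S, hi₀min⟩ := S.exists_min_image (fun i => u i / v i) hSne
      have hvS : ∀ i ∈ S, 0 < v i := fun i hi =>
        lt_of_le_of_ne (hv.2.1 i) (Ne.symm (by simpa [hSdef] using hi))
      have huS : ∀ i ∈ S, 0 < u i := fun i hi =>
        lt_of_le_of_ne (hu.2.1 i) (Ne.symm (hsub (by simpa [hSdef, Supp] using hi)))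
      set t := u i₀ / v i₀ with htdef
      have ht : 0 < t := div_pos (huS _ hi₀S) (hvS _ hi₀S)
      set w := u - t • v with hwdef
      have hw_nonneg : ∀ j, 0 ≤ w j := by
        intro j
        rcases eq_or_ne (v j) 0 with h | h
        · simp [hwdef, h, hu.2.1 j]
        · have hjS : j ∈ S := by simp [hSdef, h]
          have : t ≤ u j / v j := hi₀min j hjS
          have := (le_div_iff₀ (hvS j hjS)).mp this
          simp only [hwdef, Pi.sub_apply, Pi.smul_apply, smul_eq_mul]
          linarith
      have hw_i0 : w i₀ = 0 := by
        have hvne : v i₀ ≠ 0 := (hvS _ hi₀S).ne'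
        simp only [hwdef, Pi.sub_apply, Pi.smul_apply, smul_eq_mul, htdef]
        field_simp
        ring
      have hvu : v ⬝ᵥ A.mulVec u = 0 := aux_cross_zero A hA u v hu hv hsub
      have huv : u ⬝ᵥ A.mulVec v = 0 := by
        rw [aux_dot_symm A hA.1]; exact hvu
      have hw_quad : w ⬝ᵥ A.mulVec w = 0 := by
        simp only [hwdef, Matrix.mulVec_sub, Matrix.mulVec_smul, sub_dotProduct,
          dotProduct_sub, dotProduct_smul, smul_dotProduct, smul_eq_mul,
          hu.2.2, hv.2.2, hvu, huv]
        ring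
      -- w support strictly smaller
      have hw_sub : ∀ j, u j = 0 → w j = 0 := by
        intro j hj
        have : v j = 0 := by
          by_contra h
          exact (hsub h) hj
        simp [hwdef, hj, this]
      have hFu : i₀ ∈ Finset.univ.filter (fun i => u i ≠ 0) := by
        simp [(huS _ hi₀S).ne']
      have hcard_w : (Finset.univ.filter (fun i => w i ≠ 0)).card ≤ N := by
        have hssF : Finset.univ.filter (fun i => w i ≠ 0) ⊂
            Finset.univ.filter (fun i => u i ≠ 0) := by
          constructor
          · intro j hj
            simp only [Finset.mem_filter, Finset.mem_univ, true_and] at hj ⊢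
            intro h
            exact hj (hw_sub j h)
          · intro hcon
            have := hcon hFu
            simp [hw_i0] at this
        have := Finset.card_lt_card hssF
        omega
      have hcard_v : (Finset.univ.filter (fun i => (t • v) i ≠ 0)).card ≤ N := by
        have hFeq : Finset.univ.filter (fun i => (t • v) i ≠ 0) = S := by
          ext j
          simp [hSdef, ht.ne']
        rw [hFeq]
        have hssF : S ⊂ Finset.univ.filter (fun i => u i ≠ 0) := by
          constructor
          · intro j hj
            simp only [hSdef, Finset.mem_filter, Finset.mem_univ, true_and] at hj ⊢
            exact hsub hj
          · intro hcon
            obtain ⟨j, hju, hjv⟩ := Set.exists_of_ssubset hss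
            have : j ∈ S := hcon (by simpa [Supp] using hju)
            simp [hSdef] at this
            exact hjv this
        have := Finset.card_lt_card hssF
        omega
      have hw_ne : w ≠ 0 := by
        intro h0
        obtain ⟨j, hju, hjv⟩ := Set.exists_of_ssubset hss
        have hwj : w j = 0 := by rw [h0]; rfl
        have : u j = t * v j := by
          have := hwj
          simp only [hwdef, Pi.sub_apply, Pi.smul_apply, smul_eq_mul] at this
          linarith
        apply hju
        simp only [Supp, Set.mem_setOf_eq, not_not] at hjv ⊢
        simp [this, hjv]
      have hw_zero : IsZeroOf A w := ⟨hw_ne, hw_nonneg, hw_quad⟩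
      have htv_zero : IsZeroOf A (t • v) := by
        refine ⟨smul_ne_zero ht.ne' hv.1, fun j => by
          simp only [Pi.smul_apply, smul_eq_mul]
          exact mul_nonneg ht.le (hv.2.1 j), ?_⟩
        simp [Matrix.mulVec_smul, dotProduct_smul, smul_dotProduct, hv.2.2]
      obtain ⟨m₁, f₁, hf₁, hsum₁⟩ := ih w hw_zero hcard_w
      obtain ⟨m₂, f₂, hf₂, hsum₂⟩ := ih (t • v) htv_zero hcard_v
      refine ⟨m₁ + m₂, Fin.append f₁ f₂, ?_, ?_⟩
      · intro i
        refine Fin.addCases (fun j => ?_) (fun j => ?_) i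
        · rw [Fin.append_left]; exact hf₁ j
        · rw [Fin.append_right]; exact hf₂ j
      · rw [Fin.sum_univ_add]
        simp only [Fin.append_left, Fin.append_right]
        rw [← hsum₁, ← hsum₂, hwdef]
        abel
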